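/- For every integer r ≥ 3, the rainbow 3-connectivity of the complete bipartite graph K_{r,r} equals 3, i.e., rc_3(K_{r,r}) = 3. -/

import Mathlib

open SimpleGraph

/-- The complete bipartite graph `K_{r,r}` with both parts `Fin r`. -/
abbrev Krr (r : ℕ) : SimpleGraph (Fin r ⊕ Fin r) :=
  completeBipartiteGraph (Fin r) (Fin r)

/-- A walk is a rainbow path (w.r.t. edge-coloring `c`) if it is a path and
all its edges receive pairwise distinct colors. -/
def RainbowPath {V α : Type*} {G : SimpleGraph V} (c : Sym2 V → α) {u v : V}
    (p : G.Walk u v) : Prop :=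
  p.IsPath ∧ (p.edges.map c).Nodup

/-- Two `u`-`v` walks are internally disjoint if they share no vertices other
than `u` and `v`. -/
def IntDisjoint {V : Type*} {G : SimpleGraph V} {u v : V}
    (p q : G.Walk u v) : Prop :=
  ∀ x, x ∈ p.support → x ∈ q.support → x = u ∨ x = v

/-- `G` admits a `j`-edge-coloring under which every two distinct vertices are
joined by at least `k` internally disjoint rainbow paths. -/
def HasRainbowKColoring {V : Type*} (G : SimpleGraph V) (k j : ℕ) : Prop :=
  ∃ c : Sym2 V → Fin j, ∀ u v : V, u ≠ v →
    ∃ P : Fin k → G.Walk u v, Function.Injective P ∧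
      (∀ i, RainbowPath c (P i)) ∧
      ∀ i i', i ≠ i' → IntDisjoint (P i) (P i')

/-- The rainbow `k`-connectivity: the least number of colors as above. -/
noncomputable def rck {V : Type*} (G : SimpleGraph V) (k : ℕ) : ℕ :=
  sInf {j | HasRainbowKColoring G k j}

namespace KrrAux

variable {r : ℕ} [NeZero r]

/-- The matrix of colors. -/
def M (i j : Fin r) : Fin 3 := if i = j then 1 else if j = i + 1 then 2 else 0

def cf : Fin r ⊕ Fin r → Fin r ⊕ Fin r → Fin 3
  | .inl i, .inr j => M i j
  | .inr j, .inl i => M i j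
  | _, _ => 0

lemma cf_comm (x y : Fin r ⊕ Fin r) : cf x y = cf y x := by
  rcases x with i | i <;> rcases y with j | j <;> rfl

/-- The coloring. -/
def col : Sym2 (Fin r ⊕ Fin r) → Fin 3 := Sym2.lift ⟨cf, cf_comm⟩

@[simp] lemma col_lr (i j : Fin r) : col s(Sum.inl i, Sum.inr j) = M i j := rfl
@[simp] lemma col_rl (i j : Fin r) : col s(Sum.inr j, Sum.inl i) = M i j := rfl

lemma M_diag (a : Fin r) : M a a = 1 := by simp [M]
lemma M_succ (a : Fin r) (h : (1 : Fin r) ≠ 0) : M a (a + 1) = 2 := by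
  have : a ≠ a + 1 := fun hh => h (by simpa using hh.symm)
  simp [M, this]
lemma M_zero {a j : Fin r} (h1 : j ≠ a) (h2 : j ≠ a + 1) : M a j = 0 := by
  simp [M, h1.symm, h2]
lemma M_ne_one {i j : Fin r} (h : i ≠ j) : M i j ≠ 1 := by
  simp only [M, if_neg h]; split <;> decide
lemma M_ne_two {i j : Fin r} (h : j ≠ i + 1) : M i j ≠ 2 := by
  simp only [M, if_neg h]; split <;> decide

-- walks
lemma adj_lr (a b : Fin r) : (Krr r).Adj (Sum.inl a) (Sum.inr b) := by simp
lemma adj_rl (a b : Fin r) : (Krr r).Adj (Sum.inr a) (Sum.inl b) := by simp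

def p1 (a b : Fin r) : (Krr r).Walk (Sum.inl a) (Sum.inr b) :=
  .cons (adj_lr a b) .nil
def p2 (a j b : Fin r) : (Krr r).Walk (Sum.inl a) (Sum.inl b) :=
  .cons (adj_lr a j) (.cons (adj_rl j b) .nil)
def p2' (a j b : Fin r) : (Krr r).Walk (Sum.inr a) (Sum.inr b) :=
  .cons (adj_rl a j) (.cons (adj_lr j b) .nil)
def p3 (a j i b : Fin r) : (Krr r).Walk (Sum.inl a) (Sum.inr b) :=
  .cons (adj_lr a j) (.cons (adj_rl j i) (.cons (adj_lr i b) .nil))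

@[simp] lemma p1_support (a b : Fin r) : (p1 a b).support = [Sum.inl a, Sum.inr b] := rfl
@[simp] lemma p2_support (a j b : Fin r) :
    (p2 a j b).support = [Sum.inl a, Sum.inr j, Sum.inl b] := rfl
@[simp] lemma p2'_support (a j b : Fin r) :
    (p2' a j b).support = [Sum.inr a, Sum.inl j, Sum.inr b] := rfl
@[simp] lemma p3_support (a j i b : Fin r) :
    (p3 a j i b).support = [Sum.inl a, Sum.inr j, Sum.inl i, Sum.inr b] := rfl

lemma p1_rainbow (a b : Fin r) : RainbowPath col (p1 a b) := by
  constructor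
  · rw [Walk.isPath_def]; simp
  · simp [p1]

lemma p2_rainbow {a j b : Fin r} (hab : a ≠ b) (hc : M a j ≠ M b j) :
    RainbowPath col (p2 a j b) := by
  constructor
  · rw [Walk.isPath_def]; simp [hab]
  · simp [p2, hc]

lemma p2'_rainbow {a j b : Fin r} (hab : a ≠ b) (hc : M j a ≠ M j b) :
    RainbowPath col (p2' a j b) := by
  constructor
  · rw [Walk.isPath_def]; simp [hab]
  · simp [p2', hc]

lemma p3_rainbow {a j i b : Fin r} (hia : i ≠ a) (hjb : j ≠ b)
    (h1 : M a j ≠ M i j) (h2 : M a j ≠ M i b) (h3 : M i j ≠ M i b) :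
    RainbowPath col (p3 a j i b) := by
  constructor
  · rw [Walk.isPath_def]; simp [hia.symm, hjb]
  · simp [p3, h1, h2, h3]

end KrrAux

namespace KrrAux
variable {r : ℕ} [NeZero r]

set_option linter.unusedSectionVars false

lemma exists_left {a b j1 j2 j3 : Fin r} (hab : a ≠ b)
    (h12 : j1 ≠ j2) (h13 : j1 ≠ j3) (h23 : j2 ≠ j3)
    (hc1 : M a j1 ≠ M b j1) (hc2 : M a j2 ≠ M b j2) (hc3 : M a j3 ≠ M b j3) :
    ∃ P : Fin 3 → (Krr r).Walk (Sum.inl a) (Sum.inl b), Function.Injective P ∧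
      (∀ i, RainbowPath col (P i)) ∧
      ∀ i i', i ≠ i' → IntDisjoint (P i) (P i') := by
  refine ⟨![p2 a j1 b, p2 a j2 b, p2 a j3 b], ?_, ?_, ?_⟩
  · have key : ∀ x y : Fin r, p2 (r := r) a x b = p2 a y b → x = y := by
      intro x y h
      have := congrArg Walk.support h
      simpa using this
    intro i i' h
    fin_cases i <;> fin_cases i' <;> first
      | rfl
      | (exact absurd (key _ _ (by simpa using h)) (by simp [h12, h13, h23, h12.symm, h13.symm, h23.symm]))
  · intro i
    fin_cases i <;> [exact p2_rainbow hab hc1; exact p2_rainbow hab hc2; exact p2_rainbow hab hc3]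
  · have key : ∀ x y : Fin r, x ≠ y → IntDisjoint (p2 a x b) (p2 a y b) := by
      intro x y hxy z hz hz'
      simp only [p2_support, List.mem_cons, List.not_mem_nil, or_false] at hz hz'
      rcases hz with h | h | h <;> rcases hz' with h' | h' | h' <;> simp_all
    intro i i' h
    fin_cases i <;> fin_cases i' <;> first
      | (exact absurd rfl h)
      | exact key _ _ (by assumption)
      | exact key _ _ (Ne.symm (by assumption))

lemma exists_right {a b j1 j2 j3 : Fin r} (hab : a ≠ b)
    (h12 : j1 ≠ j2) (h13 : j1 ≠ j3) (h23 : j2 ≠ j3)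
    (hc1 : M j1 a ≠ M j1 b) (hc2 : M j2 a ≠ M j2 b) (hc3 : M j3 a ≠ M j3 b) :
    ∃ P : Fin 3 → (Krr r).Walk (Sum.inr a) (Sum.inr b), Function.Injective P ∧
      (∀ i, RainbowPath col (P i)) ∧
      ∀ i i', i ≠ i' → IntDisjoint (P i) (P i') := by
  refine ⟨![p2' a j1 b, p2' a j2 b, p2' a j3 b], ?_, ?_, ?_⟩
  · have key : ∀ x y : Fin r, p2' (r := r) a x b = p2' a y b → x = y := by
      intro x y h
      have := congrArg Walk.support h
      simpa using this
    intro i i' h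
    fin_cases i <;> fin_cases i' <;> first
      | rfl
      | (exact absurd (key _ _ (by simpa using h)) (by simp [h12, h13, h23, h12.symm, h13.symm, h23.symm]))
  · intro i
    fin_cases i <;> [exact p2'_rainbow hab hc1; exact p2'_rainbow hab hc2; exact p2'_rainbow hab hc3]
  · have key : ∀ x y : Fin r, x ≠ y → IntDisjoint (p2' a x b) (p2' a y b) := by
      intro x y hxy z hz hz'
      simp only [p2'_support, List.mem_cons, List.not_mem_nil, or_false] at hz hz'
      rcases hz with h | h | h <;> rcases hz' with h' | h' | h' <;> simp_all
    intro i i' h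
    fin_cases i <;> fin_cases i' <;> first
      | (exact absurd rfl h)
      | exact key _ _ (by assumption)
      | exact key _ _ (Ne.symm (by assumption))

lemma exists_lr {a b j1 i1 j2 i2 : Fin r}
    (hj1 : j1 ≠ b) (hi1 : i1 ≠ a) (hj2 : j2 ≠ b) (hi2 : i2 ≠ a)
    (hjj : j1 ≠ j2) (hii : i1 ≠ i2)
    (c11 : M a j1 ≠ M i1 j1) (c12 : M a j1 ≠ M i1 b) (c13 : M i1 j1 ≠ M i1 b)
    (c21 : M a j2 ≠ M i2 j2) (c22 : M a j2 ≠ M i2 b) (c23 : M i2 j2 ≠ M i2 b) :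
    ∃ P : Fin 3 → (Krr r).Walk (Sum.inl a) (Sum.inr b), Function.Injective P ∧
      (∀ i, RainbowPath col (P i)) ∧
      ∀ i i', i ≠ i' → IntDisjoint (P i) (P i') := by
  refine ⟨![p1 a b, p3 a j1 i1 b, p3 a j2 i2 b], ?_, ?_, ?_⟩
  · have len13 : ∀ x y : Fin r, p1 (r := r) a b ≠ p3 a x y b := by
      intro x y h
      have := congrArg Walk.length h
      simp [p1, p3] at this
    have key : ∀ x y x' y' : Fin r, p3 (r := r) a x y b = p3 a x' y' b → x = x' := by
      intro x y x' y' h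
      have := congrArg Walk.support h
      simp at this
      exact this.1
    intro i i' h
    fin_cases i <;> fin_cases i' <;> first
      | rfl
      | (exact absurd (by simpa using h) (len13 _ _))
      | (exact absurd (by simpa using h.symm) (len13 _ _))
      | (exact absurd (key _ _ _ _ (by simpa using h)) hjj)
      | (exact absurd (key _ _ _ _ (by simpa using h)) hjj.symm)
  · intro i
    fin_cases i <;>
      [exact p1_rainbow a b; exact p3_rainbow hi1 hj1 c11 c12 c13;
       exact p3_rainbow hi2 hj2 c21 c22 c23]
  · have key1 : ∀ x y : Fin r, x ≠ b → y ≠ a → IntDisjoint (p1 (r := r) a b) (p3 a x y b) := by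
      intro x y hx hy z hz hz'
      simp only [p1_support, List.mem_cons, List.not_mem_nil, or_false] at hz
      tauto
    have key1' : ∀ x y : Fin r, x ≠ b → y ≠ a → IntDisjoint (p3 (r := r) a x y b) (p1 a b) := by
      intro x y hx hy z hz hz'
      exact key1 x y hx hy z hz' hz
    have key : ∀ x y x' y' : Fin r, x ≠ x' → y ≠ y' →
        IntDisjoint (p3 (r := r) a x y b) (p3 a x' y' b) := by
      intro x y x' y' hx hy z hz hz'
      simp only [p3_support, List.mem_cons, List.not_mem_nil, or_false] at hz hz'
      rcases hz with h | h | h | h <;> rcases hz' with h' | h' | h' | h' <;> simp_all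
    intro i i' h
    fin_cases i <;> fin_cases i' <;> first
      | (exact absurd rfl h)
      | exact key1 _ _ (by assumption) (by assumption)
      | exact key1' _ _ (by assumption) (by assumption)
      | exact key _ _ _ _ hjj hii
      | exact key _ _ _ _ hjj.symm hii.symm

end KrrAux

namespace KrrAux
variable {r : ℕ} [NeZero r]
set_option linter.unusedSectionVars false

lemma exists_rev {V : Type*} {G : SimpleGraph V} {c : Sym2 V → Fin 3} {u v : V}
    (h : ∃ P : Fin 3 → G.Walk u v, Function.Injective P ∧
      (∀ i, RainbowPath c (P i)) ∧ ∀ i i', i ≠ i' → IntDisjoint (P i) (P i')) :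
    ∃ P : Fin 3 → G.Walk v u, Function.Injective P ∧
      (∀ i, RainbowPath c (P i)) ∧ ∀ i i', i ≠ i' → IntDisjoint (P i) (P i') := by
  obtain ⟨P, hinj, hrb, hd⟩ := h
  refine ⟨fun i => (P i).reverse, ?_, ?_, ?_⟩
  · intro i i' h
    apply hinj
    have := congrArg Walk.reverse h
    simpa using this
  · intro i
    obtain ⟨hp, hn⟩ := hrb i
    refine ⟨hp.reverse, ?_⟩
    rw [Walk.edges_reverse, List.map_reverse]
    exact List.nodup_reverse.mpr hn
  · intro i i' h x hx hx'
    rw [Walk.support_reverse, List.mem_reverse] at hx hx'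
    rcases hd i i' h x hx hx' with h | h <;> simp [h]

-- Fin r arithmetic facts, r ≥ 3
section arith
variable (h1 : (1 : Fin r) ≠ 0) (h2 : (1 : Fin r) + 1 ≠ 0)

include h1 in
lemma ne_a1 (a : Fin r) : a + 1 ≠ a := fun h => h1 (by simpa using h)
include h2 in
lemma ne_a2 (a : Fin r) : a + 1 + 1 ≠ a := fun h => h2 (by
  rw [add_assoc] at h; simpa using h)
include h1 in
lemma ne_12 (a : Fin r) : a + 1 + 1 ≠ a + 1 := ne_a1 h1 (a + 1)
include h1 in
lemma ne_m1 (a : Fin r) : a - 1 ≠ a := fun h => h1 (by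
  have : a - 1 + 1 = a + 1 := by rw [h]
  rw [sub_add_cancel] at this
  simpa using this.symm)
include h2 in
lemma ne_m1p1 (a : Fin r) : a - 1 ≠ a + 1 := fun h => h2 (by
  rw [sub_eq_iff_eq_add] at h
  rw [add_assoc] at h
  simpa using h)
lemma sub_one_add_one (a : Fin r) : a - 1 + 1 = a := sub_add_cancel a 1
include h2 in
lemma ne_m2 (a : Fin r) : a - 1 - 1 ≠ a := fun h => ne_a2 h2 a (by
  have h' := congrArg (· + 1 + 1) h
  simp only [sub_add_cancel] at h'
  exact h'.symm)

end arith
end KrrAux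

namespace KrrAux
variable {r : ℕ} [NeZero r]
set_option linter.unusedSectionVars false

variable (h1 : (1 : Fin r) ≠ 0) (h2 : (1 : Fin r) + 1 ≠ 0)

include h1 in
lemma M_pred (a : Fin r) : M (a - 1) a = 2 := by
  have e : a - 1 + 1 = a := sub_one_add_one a
  have := M_succ (a - 1) h1
  rwa [e] at this

include h1 h2 in
lemma main_left {a b : Fin r} (hab : a ≠ b) :
    ∃ P : Fin 3 → (Krr r).Walk (Sum.inl a) (Sum.inl b), Function.Injective P ∧
      (∀ i, RainbowPath col (P i)) ∧
      ∀ i i', i ≠ i' → IntDisjoint (P i) (P i') := by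
  have hc1 : M a a ≠ M b a := by
    rw [M_diag]; exact (M_ne_one (Ne.symm hab)).symm
  have hc2 : M a (a+1) ≠ M b (a+1) := by
    rw [M_succ a h1]
    exact (M_ne_two (fun h => hab (by simpa using h))).symm
  have hcb : M a b ≠ M b b := by
    rw [M_diag]; exact M_ne_one hab
  by_cases hb : b = a + 1
  · have hc3 : M a (b+1) ≠ M b (b+1) := by
      rw [M_succ b h1]
      exact M_ne_two (fun h => hab (by simpa using h.symm))
    refine exists_left hab hab ?_ ?_ hc1 hcb hc3
    · rw [hb]; exact (ne_a2 h2 a).symm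
    · exact (ne_a1 h1 b).symm
  · refine exists_left hab ?_ hab ?_ hc1 hc2 hcb
    · exact (ne_a1 h1 a).symm
    · exact fun h => hb h.symm

include h1 h2 in
lemma main_right {a b : Fin r} (hab : a ≠ b) :
    ∃ P : Fin 3 → (Krr r).Walk (Sum.inr a) (Sum.inr b), Function.Injective P ∧
      (∀ i, RainbowPath col (P i)) ∧
      ∀ i i', i ≠ i' → IntDisjoint (P i) (P i') := by
  have e : a - 1 + 1 = a := sub_one_add_one a
  have hc1 : M a a ≠ M a b := by
    rw [M_diag]; exact (M_ne_one hab).symm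
  have hc2 : M (a-1) a ≠ M (a-1) b := by
    rw [M_pred h1]
    exact (M_ne_two (by rw [e]; exact hab.symm)).symm
  have hcb : M b a ≠ M b b := by
    rw [M_diag]; exact M_ne_one hab.symm
  by_cases hb : b = a - 1
  · subst hb
    have hc3 : M (a-1-1) a ≠ M (a-1-1) (a-1) := by
      rw [M_pred h1 (a-1)]
      exact M_ne_two (by rw [sub_one_add_one (a-1)]; exact (ne_m1 h1 a).symm)
    exact exists_right hab (ne_m1 h1 a).symm (ne_m2 h2 a).symm
      (ne_m1 h1 (a-1)).symm hc1 hc2 hc3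
  · refine exists_right hab ?_ hab ?_ hc1 hc2 hcb
    · exact (ne_m1 h1 a).symm
    · exact fun h => hb h.symm

include h1 h2 in
lemma main_lr (a b : Fin r) :
    ∃ P : Fin 3 → (Krr r).Walk (Sum.inl a) (Sum.inr b), Function.Injective P ∧
      (∀ i, RainbowPath col (P i)) ∧
      ∀ i i', i ≠ i' → IntDisjoint (P i) (P i') := by
  by_cases e0 : b = a
  · subst e0
    -- pairs (j1,i1) = (b-1,b-1), (j2,i2) = (b+1,b+1)
    have v1 : M b (b-1) = 0 := M_zero (ne_m1 h1 b) (ne_m1p1 h2 b)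
    have v2 : M (b-1) (b-1) = 1 := M_diag _
    have v3 : M (b-1) b = 2 := M_pred h1 b
    have w1 : M b (b+1) = 2 := M_succ b h1
    have w2 : M (b+1) (b+1) = 1 := M_diag _
    have w3 : M (b+1) b = 0 := M_zero (ne_a1 h1 b).symm (ne_a2 h2 b).symm
    exact exists_lr (j1 := b-1) (i1 := b-1) (j2 := b+1) (i2 := b+1)
      (ne_m1 h1 b) (ne_m1 h1 b) (ne_a1 h1 b) (ne_a1 h1 b)
      (ne_m1p1 h2 b) (ne_m1p1 h2 b)
      (by rw [v1, v2]; decide) (by rw [v1, v3]; decide) (by rw [v2, v3]; decide)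
      (by rw [w1, w2]; decide) (by rw [w1, w3]; decide) (by rw [w2, w3]; decide)
  by_cases e1 : b = a + 1
  · subst e1
    have ea : a - 1 + 1 = a := sub_one_add_one a
    -- pairs (j1,i1) = (a, a-1), (j2,i2) = (a+1+1, a+1)
    have v1 : M a a = 1 := M_diag a
    have v2 : M (a-1) a = 2 := M_pred h1 a
    have v3 : M (a-1) (a+1) = 0 :=
      M_zero (ne_m1p1 h2 a).symm (by rw [ea]; exact ne_a1 h1 a)
    have w1 : M a (a+1+1) = 0 := M_zero (ne_a2 h2 a) (ne_12 h1 a)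
    have w2 : M (a+1) (a+1+1) = 2 := M_succ (a+1) h1
    have w3 : M (a+1) (a+1) = 1 := M_diag _
    exact exists_lr (j1 := a) (i1 := a-1) (j2 := a+1+1) (i2 := a+1)
      (ne_a1 h1 a).symm (ne_m1 h1 a) (ne_12 h1 a) (ne_a1 h1 a)
      (ne_a2 h2 a).symm (ne_m1p1 h2 a)
      (by rw [v1, v2]; decide) (by rw [v1, v3]; decide) (by rw [v2, v3]; decide)
      (by rw [w1, w2]; decide) (by rw [w1, w3]; decide) (by rw [w2, w3]; decide)
  by_cases e2 : b = a + 1 + 1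
  · subst e2
    -- pairs (j1,i1) = (a+1, a+1+1), (j2,i2) = (a, a+1)
    have v1 : M a (a+1) = 2 := M_succ a h1
    have v2 : M (a+1+1) (a+1) = 0 := M_zero (ne_12 h1 a).symm (ne_a2 h2 (a+1)).symm
    have v3 : M (a+1+1) (a+1+1) = 1 := M_diag _
    have w1 : M a a = 1 := M_diag a
    have w2 : M (a+1) a = 0 := M_zero (ne_a1 h1 a).symm (ne_a2 h2 a).symm
    have w3 : M (a+1) (a+1+1) = 2 := M_succ (a+1) h1
    exact exists_lr (j1 := a+1) (i1 := a+1+1) (j2 := a) (i2 := a+1)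
      (ne_12 h1 a).symm (ne_a2 h2 a) (ne_a2 h2 a).symm (ne_a1 h1 a)
      (ne_a1 h1 (a)) (ne_12 h1 a)
      (by rw [v1, v2]; decide) (by rw [v1, v3]; decide) (by rw [v2, v3]; decide)
      (by rw [w1, w2]; decide) (by rw [w1, w3]; decide) (by rw [w2, w3]; decide)
  · -- general case: pairs (j1,i1) = (a+1, b), (j2,i2) = (b-1, b-1)
    have eb : b - 1 + 1 = b := sub_one_add_one b
    have hba : b ≠ a := e0
    have hb1 : b - 1 ≠ a := fun h => e1 (by rw [← h, eb])
    have hb2 : a + 1 ≠ b - 1 := fun h => e2 (by rw [h, eb])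
    have v1 : M a (a+1) = 2 := M_succ a h1
    have v2 : M b (a+1) = 0 :=
      M_zero (fun h => e1 h.symm) (fun h => hba (by simpa using h.symm))
    have v3 : M b b = 1 := M_diag b
    have w1 : M a (b-1) = 0 := M_zero hb1 hb2.symm
    have w2 : M (b-1) (b-1) = 1 := M_diag _
    have w3 : M (b-1) b = 2 := M_pred h1 b
    exact exists_lr (j1 := a+1) (i1 := b) (j2 := b-1) (i2 := b-1)
      (fun h => e1 h.symm) hba (ne_m1 h1 b) hb1 hb2 (ne_m1 h1 b).symm
      (by rw [v1, v2]; decide) (by rw [v1, v3]; decide) (by rw [v2, v3]; decide)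
      (by rw [w1, w2]; decide) (by rw [w1, w3]; decide) (by rw [w2, w3]; decide)

end KrrAux

namespace KrrAux
variable {r : ℕ} [NeZero r]
set_option linter.unusedSectionVars false

lemma fin_one_ne_zero (hr : 3 ≤ r) : (1 : Fin r) ≠ 0 := by
  intro h
  have := congrArg Fin.val h
  rw [Fin.val_one', Fin.val_zero, Nat.mod_eq_of_lt (by omega)] at this
  omega

lemma fin_two_ne_zero (hr : 3 ≤ r) : (1 : Fin r) + 1 ≠ 0 := by
  intro h
  have := congrArg Fin.val h
  rw [Fin.val_add, Fin.val_one', Fin.val_zero,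
    Nat.mod_eq_of_lt (show 1 < r by omega), Nat.mod_eq_of_lt (show 1 + 1 < r by omega)] at this
  omega

lemma upper (hr : 3 ≤ r) : HasRainbowKColoring (Krr r) 3 3 := by
  have h1 := fin_one_ne_zero hr
  have h2 := fin_two_ne_zero hr
  refine ⟨col, ?_⟩
  rintro (a | a) (b | b) huv
  · exact main_left h1 h2 (by simpa using huv)
  · exact main_lr h1 h2 a b
  · exact exists_rev (main_lr h1 h2 b a)
  · exact main_right h1 h2 (by simpa using huv)

lemma parity {u v : Fin r ⊕ Fin r} (p : (Krr r).Walk u v) :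
    Even p.length ↔ (u.isLeft = v.isLeft) := by
  induction p with
  | nil => simp
  | @cons u w v h q ih =>
    rw [Walk.length_cons, Nat.even_add_one, ih]
    rcases u with a | a <;> rcases w with b | b <;> rcases v with c | c <;> simp_all

lemma length_one_unique {u v : Fin r ⊕ Fin r} (p q : (Krr r).Walk u v)
    (hp : p.length = 1) (hq : q.length = 1) : p = q := by
  cases p with
  | nil => simp at hp
  | cons h p' =>
    cases p' with
    | nil =>
      cases q with
      | nil => simp at hq
      | cons h' q' =>
        cases q' with
        | nil => rfl
        | cons h'' q'' => simp [Walk.length_cons] at hq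
    | cons h3 p'' => simp [Walk.length_cons] at hp

lemma lower (hr : 3 ≤ r) {j : ℕ} (hj : j ≤ 2) : ¬ HasRainbowKColoring (Krr r) 3 j := by
  rintro ⟨c, hc⟩
  have h0 : (0 : ℕ) < r := by omega
  obtain ⟨P, hinj, hrb, -⟩ := hc (Sum.inl ⟨0, h0⟩) (Sum.inr ⟨0, h0⟩) (by simp)
  have hlen : ∀ i, (P i).length = 1 := by
    intro i
    obtain ⟨-, hn⟩ := hrb i
    have hle : (P i).length ≤ j := by
      have := hn.length_le_card
      rw [← Walk.length_edges]; simpa using this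
    have hodd : ¬ Even (P i).length := by
      rw [parity (P i)]; simp
    have hmod : (P i).length % 2 = 1 := Nat.odd_iff.mp (Nat.not_even_iff_odd.mp hodd)
    omega
  have : P 0 = P 1 := length_one_unique _ _ (hlen 0) (hlen 1)
  have := hinj this
  simp at this

end KrrAux

theorem stmt3 (r : ℕ) (hr : 3 ≤ r) : rck (Krr r) 3 = 3 := by
  haveI : NeZero r := ⟨by omega⟩
  have hu := KrrAux.upper hr
  refine le_antisymm (Nat.sInf_le hu) (le_csInf ⟨3, hu⟩ ?_)
  intro j hj
  by_contra hlt
  exact KrrAux.lower hr (by omega) hj
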